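/- Let Σ ∈ ℝ^{n×n} be symmetric positive definite, let D ∈ ℝ^{n×n} be diagonal with positive diagonal entries, and let P ∈ ℝ^{n×n} be a permutation matrix. Set Σ̃ = P D Σ D Pᵀ, and let C and C̃ denote the correlation matrices of Σ and Σ̃ respectively (i.e. C = Λ_σ^{-1} Σ Λ_σ^{-1} with Λ_σ the diagonal matrix of square roots of the diagonal of Σ, and analogously for Σ̃). Then C̃ = P C Pᵀ, and consequently the multiset of eigenvalues of C̃ equals that of C, so the OASIS maximal average correlation (1/n)·Σ_i λ_i^{1/2} computed from Σ̃ equals that computed from Σ. That is, the OASIS identification value is invariant to reordering and rescaling of the variables. -/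

import Mathlib

open Matrix BigOperators


section AuxLemmas
open Polynomial

lemma aux_charpoly_conj {m : ℕ} (U V A : Matrix (Fin m) (Fin m) ℝ)
    (h1 : U * V = 1) :
    (U * A * V).charpoly = A.charpoly := by
  have hcm : charmatrix (U * A * V)
      = U.map (Polynomial.C) * charmatrix A * V.map (Polynomial.C) := by
    unfold charmatrix
    rw [RingHom.mapMatrix_apply, RingHom.mapMatrix_apply, Matrix.map_mul, Matrix.map_mul]
    rw [Matrix.mul_sub, Matrix.sub_mul]
    congr 1
    rw [mul_assoc, scalar_commute (X : ℝ[X]) (Commute.all _) (V.map Polynomial.C), ← mul_assoc,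
      ← Matrix.map_mul, h1]
    simp
  unfold Matrix.charpoly
  rw [hcm, det_mul, det_mul]
  have hdet : (U.map (Polynomial.C (R := ℝ))).det * (V.map (Polynomial.C (R := ℝ))).det = 1 := by
    rw [← det_mul, ← Matrix.map_mul, h1]
    simp
  ring_nf
  calc (U.map (Polynomial.C (R := ℝ))).det * (charmatrix A).det * (V.map (Polynomial.C (R := ℝ))).det
      = (charmatrix A).det * ((U.map (Polynomial.C (R := ℝ))).det * (V.map (Polynomial.C (R := ℝ))).det) := by ring
    _ = (charmatrix A).det := by rw [hdet, mul_one]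

lemma aux_herm_charpoly {m : ℕ} {A : Matrix (Fin m) (Fin m) ℝ} (hA : A.IsHermitian) :
    A.charpoly = ∏ i, (X - Polynomial.C (hA.eigenvalues i)) := by
  have hU := hA.eigenvectorUnitary.2
  rw [Unitary.mem_iff] at hU
  conv_lhs => rw [hA.spectral_theorem]
  rw [Unitary.conjStarAlgAut_apply, aux_charpoly_conj _ _ _ hU.2]
  rw [charpoly_of_upperTriangular _ (blockTriangular_diagonal _)]
  simp [RCLike.ofReal_real_eq_id]

lemma aux_herm_roots {m : ℕ} {A : Matrix (Fin m) (Fin m) ℝ} (hA : A.IsHermitian) :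
    A.charpoly.roots = Multiset.map hA.eigenvalues Finset.univ.val := by
  rw [aux_herm_charpoly hA, Finset.prod_eq_multiset_prod]
  have : Multiset.map (fun i => X - Polynomial.C (hA.eigenvalues i)) Finset.univ.val
      = Multiset.map (fun a => X - Polynomial.C a) (Multiset.map hA.eigenvalues Finset.univ.val) := by
    rw [Multiset.map_map]; rfl
  rw [this, roots_multiset_prod_X_sub_C]


lemma aux_exists_perm {n : ℕ} {f g : Fin n → ℝ}
    (h : Multiset.map f Finset.univ.val = Multiset.map g Finset.univ.val) :
    ∃ σ : Equiv.Perm (Fin n), ∀ i, f i = g (σ i) := by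
  rw [Fin.univ_val_map, Fin.univ_val_map] at h
  have hp : (List.ofFn f).Perm (List.ofFn g) := Multiset.coe_eq_coe.mp h
  have h1 : List.ofFn (f ∘ Tuple.sort f) = List.ofFn (g ∘ Tuple.sort g) := by
    exact List.Perm.eq_of_sortedLE (Tuple.monotone_sort f).sortedLE_ofFn
      (Tuple.monotone_sort g).sortedLE_ofFn
      (((Tuple.sort f).ofFn_comp_perm f).trans
        (hp.trans ((Tuple.sort g).ofFn_comp_perm g).symm))
  have h2 : f ∘ Tuple.sort f = g ∘ Tuple.sort g := List.ofFn_injective h1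
  refine ⟨(Tuple.sort f).symm.trans (Tuple.sort g), fun i => ?_⟩
  have := congrFun h2 ((Tuple.sort f).symm i)
  simpa using this

end AuxLemmas

/-- **Order- and scale-invariance of OASIS.** Let `Σ̃ = P D Σ D Pᵀ` for a
permutation matrix `P` and a positive diagonal matrix `D`. Then the correlation
matrices satisfy `C̃ = P C Pᵀ`, the eigenvalues of `C̃` are a permutation of
those of `C`, and the OASIS value `(1/n)·Σ_i λ_i^{1/2}` computed from `Σ̃`
equals that computed from `Σ`. -/
theorem stmt_19 {n : ℕ} (hn : 1 ≤ n)
    (S : Matrix (Fin n) (Fin n) ℝ) (hS : S.PosDef)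
    (d : Fin n → ℝ) (hd : ∀ i, 0 < d i)
    (e : Equiv.Perm (Fin n))
    (P : Matrix (Fin n) (Fin n) ℝ) (hP : P = e.permMatrix ℝ)
    (S' : Matrix (Fin n) (Fin n) ℝ)
    (hS' : S' = P * (Matrix.diagonal d * S * Matrix.diagonal d) * Pᵀ)
    (Ls Ls' : Matrix (Fin n) (Fin n) ℝ)
    (hLs : Ls = Matrix.diagonal (fun i => Real.sqrt (S i i)))
    (hLs' : Ls' = Matrix.diagonal (fun i => Real.sqrt (S' i i)))
    (C C' : Matrix (Fin n) (Fin n) ℝ)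
    (hC : C = Ls⁻¹ * S * Ls⁻¹) (hC' : C' = Ls'⁻¹ * S' * Ls'⁻¹)
    (hCh : C.IsHermitian) (hC'h : C'.IsHermitian) :
    C' = P * C * Pᵀ ∧
    (∃ g : Equiv.Perm (Fin n), ∀ i, hC'h.eigenvalues i = hCh.eigenvalues (g i)) ∧
    (1 / (n : ℝ)) * ∑ i, Real.sqrt (hC'h.eigenvalues i)
      = (1 / (n : ℝ)) * ∑ i, Real.sqrt (hCh.eigenvalues i) := by
  -- conjugation by P is submatrix
  have key : ∀ M : Matrix (Fin n) (Fin n) ℝ, P * M * Pᵀ = M.submatrix e e := by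
    intro M
    have h1 : ∀ N : Matrix (Fin n) (Fin n) ℝ, P * N = N.submatrix e id := fun N => by
      rw [hP]; exact PEquiv.toMatrix_toPEquiv_mul e N
    have h2 : P * M * Pᵀ = (P * (P * M)ᵀ)ᵀ := by
      rw [transpose_mul, transpose_transpose]
    rw [h2, h1, h1]
    ext i j
    simp
  -- positive diagonal entries
  have hdiag : ∀ i, 0 < S i i := fun i => by
    have hx : (Pi.single i 1 : Fin n → ℝ) ≠ 0 := by
      intro hcon
      have := congrFun hcon i
      simp at this
    have := hS.dotProduct_mulVec_pos hx
    simpa [dotProduct, mulVec, Pi.single_apply, Finset.sum_ite_eq] using this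
  -- S' entries
  have hS'e : ∀ i j, S' i j = d (e i) * S (e i) (e j) * d (e j) := by
    intro i j
    rw [hS', key]
    simp [submatrix, diagonal_mul, mul_diagonal]
  have hsq : ∀ i, Real.sqrt (S' i i) = d (e i) * Real.sqrt (S (e i) (e i)) := by
    intro i
    rw [hS'e]
    have : d (e i) * S (e i) (e i) * d (e i) = d (e i) ^ 2 * S (e i) (e i) := by ring
    rw [this, Real.sqrt_mul (sq_nonneg _), Real.sqrt_sq (hd _).le]
  have hsqpos : ∀ i, 0 < Real.sqrt (S i i) := fun i => Real.sqrt_pos.mpr (hdiag i)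
  -- inverses of diagonals
  have hLsinv : Ls⁻¹ = Matrix.diagonal (fun i => (Real.sqrt (S i i))⁻¹) := by
    apply inv_eq_right_inv
    rw [hLs, diagonal_mul_diagonal]
    have : (fun i => Real.sqrt (S i i) * (Real.sqrt (S i i))⁻¹) = fun _ => (1:ℝ) :=
      funext fun i => mul_inv_cancel₀ (hsqpos i).ne'
    rw [this, diagonal_one]
  have hsq'pos : ∀ i, 0 < Real.sqrt (S' i i) := fun i => by
    rw [hsq]; exact mul_pos (hd _) (hsqpos _)
  have hLs'inv : Ls'⁻¹ = Matrix.diagonal (fun i => (Real.sqrt (S' i i))⁻¹) := by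
    apply inv_eq_right_inv
    rw [hLs', diagonal_mul_diagonal]
    have : (fun i => Real.sqrt (S' i i) * (Real.sqrt (S' i i))⁻¹) = fun _ => (1:ℝ) :=
      funext fun i => mul_inv_cancel₀ (hsq'pos i).ne'
    rw [this, diagonal_one]
  have hCe : ∀ i j, C i j = (Real.sqrt (S i i))⁻¹ * S i j * (Real.sqrt (S j j))⁻¹ := by
    intro i j
    rw [hC, hLsinv]
    simp [diagonal_mul, mul_diagonal]
  -- Part 1
  have part1 : C' = P * C * Pᵀ := by
    rw [key]
    ext i j
    rw [hC', hLs'inv]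
    simp only [submatrix_apply, diagonal_mul, mul_diagonal]
    rw [hsq, hsq, hS'e, hCe]
    have h1 := (hd (e i)).ne'
    have h2 := (hd (e j)).ne'
    have h3 := (hsqpos (e i)).ne'
    have h4 := (hsqpos (e j)).ne'
    field_simp
  have hC'sub : C' = C.submatrix e e := by rw [part1, key]
  have hchar : C'.charpoly = C.charpoly := by
    rw [hC'sub]
    have hre : C.submatrix e e = (reindex e.symm e.symm) C := rfl
    rw [hre, charpoly_reindex]
  have hms : Multiset.map hC'h.eigenvalues Finset.univ.val
      = Multiset.map hCh.eigenvalues Finset.univ.val := by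
    rw [← aux_herm_roots hC'h, ← aux_herm_roots hCh, hchar]
  obtain ⟨g, hg⟩ := aux_exists_perm hms
  refine ⟨part1, ⟨g, hg⟩, ?_⟩
  congr 1
  calc ∑ i, Real.sqrt (hC'h.eigenvalues i)
      = ∑ i, Real.sqrt (hCh.eigenvalues (g i)) :=
        Finset.sum_congr rfl (fun i _ => by rw [hg])
    _ = ∑ i, Real.sqrt (hCh.eigenvalues i) :=
        Equiv.sum_comp g (fun i => Real.sqrt (hCh.eigenvalues i))
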